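/- Let M be a binary matroid with rank function r, let T ⊆ E(M), and let r' be the rank function of the element splitting matroid M'_T. If A ⊆ E(M) ∪ {a} with a ∈ A, then r'(A) = r(A \ {a}) + 1. -/

import Mathlib

open Set

variable {α : Type*}

/-- The rank of a set `X` in a matroid `M`: the maximum size of an independent subset of `X`. -/
noncomputable def mrank (M : Matroid α) (X : Set α) : ℕ :=
  sSup {n | ∃ I, M.Indep I ∧ I ⊆ X ∧ I.ncard = n}

/-- `(A, B)` is a `k`-separation of `M`: a partition of the ground set with both sides of
size at least `k` and `r(A) + r(B) - r(M) ≤ k - 1` (written additively). -/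
def IsKSeparation (M : Matroid α) (k : ℕ) (A B : Set α) : Prop :=
  A ∪ B = M.E ∧ Disjoint A B ∧ k ≤ A.ncard ∧ k ≤ B.ncard ∧
    mrank M A + mrank M B + 1 ≤ mrank M M.E + k

/-- `M` is `n`-connected if it has no `k`-separation for any `k < n`. -/
def NConnected (M : Matroid α) (n : ℕ) : Prop :=
  ∀ k A B, 1 ≤ k → k < n → ¬ IsKSeparation M k A B

/-- A circuit is a minimal dependent set. -/
def MCircuit (M : Matroid α) (C : Set α) : Prop := Minimal M.Dep C

/-- A cocircuit is a circuit of the dual matroid. -/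
def MCocircuit (M : Matroid α) (C : Set α) : Prop := MCircuit M✶ C

/-- A loop is a dependent singleton. -/
def MLoop (M : Matroid α) (e : α) : Prop := M.Dep {e}

/-- A coloop is a loop of the dual, i.e. an element lying in every base. -/
def MColoop (M : Matroid α) (e : α) : Prop := M✶.Dep {e}

/-- `M` is the vector matroid of the family of vectors `φ` over `GF(2)`:
a set is independent iff it lies in the ground set and the corresponding
vectors are linearly independent. -/
def IsRep {W : Type*} [AddCommGroup W] [Module (ZMod 2) W] (M : Matroid α) (φ : α → W) : Prop :=
  ∀ I : Set α, M.Indep I ↔ I ⊆ M.E ∧ LinearIndependent (ZMod 2) (I.restrict φ)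

open scoped Classical in
/-- The columns of the element splitting matrix `A'_T`: each original column gets an extra
coordinate (the new row), equal to `1` exactly on the columns labelled by `T`, and a new
column `a` which is `1` in the new row and `0` elsewhere. -/
noncomputable def splitRep {W : Type*} [AddCommGroup W] [Module (ZMod 2) W]
    (φ : α → W) (T : Set α) (a : α) : α → W × ZMod 2 :=
  fun x => if x = a then (0, 1) else (φ x, if x ∈ T then 1 else 0)

/-- `N` is the element splitting matroid `M'_T` of the binary matroid `M` (represented by `φ`)
with respect to `T`, with new element `a`. -/
def IsEleSplit {W : Type*} [AddCommGroup W] [Module (ZMod 2) W]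
    (M : Matroid α) (φ : α → W) (T : Set α) (a : α) (N : Matroid α) : Prop :=
  a ∉ M.E ∧ N.E = insert a M.E ∧ IsRep N (splitRep φ T a)

/-- `M` is the contraction `N / a` of the single element `a` from `N`. -/
def ContractElemEq (N : Matroid α) (a : α) (M : Matroid α) : Prop :=
  M.E = N.E \ {a} ∧ ∀ I : Set α,
    M.Indep I ↔ a ∉ I ∧
      ((N.Indep {a} ∧ N.Indep (insert a I)) ∨ (¬ N.Indep {a} ∧ N.Indep I))

set_option maxHeartbeats 1000000

lemma splitRep_fst_lincomb {α W : Type*} [AddCommGroup W] [Module (ZMod 2) W]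
    (φ : α → W) (T : Set α) (a : α) {I : Set α} (haI : a ∉ I)
    (l : α →₀ ZMod 2) (hl : l ∈ Finsupp.supported (ZMod 2) (ZMod 2) I) :
    (Finsupp.linearCombination (ZMod 2) (splitRep φ T a) l).1
      = Finsupp.linearCombination (ZMod 2) φ l := by
  rw [show (Finsupp.linearCombination (ZMod 2) (splitRep φ T a) l).1
      = LinearMap.fst (ZMod 2) W (ZMod 2) (Finsupp.linearCombination (ZMod 2) (splitRep φ T a) l)
      from rfl, Finsupp.apply_linearCombination, Finsupp.linearCombination_apply,
      Finsupp.linearCombination_apply]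
  refine Finsupp.sum_congr (fun i hi => ?_)
  have hiI : i ∈ I := (Finsupp.mem_supported (ZMod 2) l).mp hl hi
  have hia : i ≠ a := fun h => haI (h ▸ hiI)
  simp [splitRep, hia]

lemma eleSplit_indep_insert_iff {α W : Type*} [AddCommGroup W] [Module (ZMod 2) W]
    (M N : Matroid α) (φ : α → W) (hM : IsRep M φ) (T : Set α) (a : α)
    (hN : IsEleSplit M φ T a N) {I : Set α} (hI : I ⊆ M.E) :
    N.Indep (insert a I) ↔ M.Indep I := by
  obtain ⟨haE, hNE, hNrep⟩ := hN
  have haI : a ∉ I := fun h => haE (hI h)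
  set ψ := splitRep φ T a with hψ
  have hψa : ψ a = (0, 1) := by simp [hψ, splitRep]
  rw [hNrep, hM]
  have hsub1 : insert a I ⊆ N.E := by rw [hNE]; exact insert_subset_insert hI
  simp only [hsub1, hI, true_and]
  rw [show (insert a I).restrict ψ = fun x : ↥(insert a I) => ψ x from rfl,
    show (LinearIndependent (ZMod 2) fun x : ↥(insert a I) => ψ x) ↔ _ from linearIndepOn_insert haI]
  constructor
  · rintro ⟨hli, hspan⟩
    rw [show LinearIndependent (ZMod 2) (I.restrict φ) ↔ _ from linearIndepOn_iff]
    intro l hl h0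
    set v := Finsupp.linearCombination (ZMod 2) ψ l with hv
    have hv1 : v.1 = 0 := by rw [hv, splitRep_fst_lincomb φ T a haI l hl, h0]
    rcases (by decide : ∀ z : ZMod 2, z = 0 ∨ z = 1) v.2 with h2 | h2
    · have hv0 : v = 0 := Prod.ext hv1 h2
      exact linearIndepOn_iff.mp hli l hl hv0
    · exfalso
      refine hspan ?_
      rw [hψa, Finsupp.mem_span_image_iff_linearCombination]
      exact ⟨l, hl, Prod.ext hv1 h2⟩
  · intro hφ
    have hcomp : (LinearMap.fst (ZMod 2) W (ZMod 2)) ∘ (fun x : I => ψ x) = I.restrict φ := by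
      funext x
      have hxa : (x : α) ≠ a := fun h => haI (h ▸ x.2)
      simp [hψ, splitRep, hxa, Set.restrict]
    refine ⟨LinearIndependent.of_comp (LinearMap.fst (ZMod 2) W (ZMod 2))
      (by rw [hcomp]; exact hφ), ?_⟩
    intro hmem
    rw [hψa, Finsupp.mem_span_image_iff_linearCombination] at hmem
    obtain ⟨l, hl, hval⟩ := hmem
    have h0 : Finsupp.linearCombination (ZMod 2) φ l = 0 := by
      rw [← splitRep_fst_lincomb φ T a haI l hl, hval]
    have hl0 : l = 0 := by
      rw [show LinearIndependent (ZMod 2) (I.restrict φ) ↔ _ from linearIndepOn_iff] at hφ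
      exact hφ l hl h0
    rw [hl0, map_zero] at hval
    exact zero_ne_one (congrArg Prod.snd hval)

/-- If a ∈ A ⊆ E(M) ∪ {a}, then the rank of A in M'_T equals the rank of A \ {a} in M,
plus one. -/
theorem eleSplit_rank_of_mem {α W : Type*} [AddCommGroup W] [Module (ZMod 2) W]
    (M N : Matroid α) (φ : α → W) (hM : IsRep M φ) (T : Set α) (hT : T ⊆ M.E)
    (hfin : M.E.Finite) (a : α) (hN : IsEleSplit M φ T a N)
    (A : Set α) (hA : A ⊆ insert a M.E) (haA : a ∈ A) :
    mrank N A = mrank M (A \ {a}) + 1 := by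
  obtain ⟨haE, hNE, hNrep⟩ := hN
  have hNfull : IsEleSplit M φ T a N := ⟨haE, hNE, hNrep⟩
  have hAfin : A.Finite := (hfin.insert a).subset hA
  have hAE : A \ {a} ⊆ M.E := by
    rintro x ⟨hxA, hxa⟩
    rcases hA hxA with h | h
    · exact absurd h hxa
    · exact h
  set m := mrank M (A \ {a}) with hm
  set SM := {n | ∃ I, M.Indep I ∧ I ⊆ A \ {a} ∧ I.ncard = n} with hSM
  set SN := {n | ∃ I, N.Indep I ∧ I ⊆ A ∧ I.ncard = n} with hSN
  have hSMne : SM.Nonempty := ⟨0, ∅, M.empty_indep, empty_subset _, by simp⟩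
  have hSMbdd : BddAbove SM := by
    refine ⟨(A \ {a}).ncard, ?_⟩
    rintro n ⟨I, hI, hIA, rfl⟩
    exact Set.ncard_le_ncard hIA hAfin.diff
  -- the sup m is attained
  obtain ⟨I₀, hI₀, hI₀A, hI₀c⟩ : m ∈ SM := Nat.sSup_mem hSMne hSMbdd
  -- every element of SN is at most m + 1
  have hub : ∀ n ∈ SN, n ≤ m + 1 := by
    rintro n ⟨I, hIind, hIA, rfl⟩
    have hIfin : I.Finite := hAfin.subset hIA
    by_cases haI : a ∈ I
    · have hsub : I \ {a} ⊆ M.E := (diff_subset_diff_left hIA).trans hAE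
      have hMind : M.Indep (I \ {a}) := by
        refine (eleSplit_indep_insert_iff M N φ hM T a hNfull hsub).mp ?_
        rwa [insert_diff_singleton, insert_eq_self.mpr haI]
      have hle : (I \ {a}).ncard ≤ m :=
        le_csSup hSMbdd ⟨I \ {a}, hMind, diff_subset_diff_left hIA, rfl⟩
      have := Set.ncard_diff_singleton_add_one haI hIfin
      omega
    · have hIE : I ⊆ M.E := by
        intro x hx
        exact hAE ⟨hIA hx, fun h => haI (h ▸ hx)⟩
      have hNa : N.Indep {a} := by
        have := (eleSplit_indep_insert_iff M N φ hM T a hNfull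
          (empty_subset M.E)).mpr M.empty_indep
        simpa using this
      have hXE : insert a I ⊆ N.E := by rw [hNE]; exact insert_subset_insert hIE
      obtain ⟨B, hB, haB⟩ := hNa.subset_isBasis_of_subset
        (singleton_subset_iff.mpr (mem_insert _ _)) hXE
      obtain ⟨B', hB', hIB'⟩ := hIind.subset_isBasis_of_subset (subset_insert a I) hXE
      have hBfin : B.Finite := ((hIfin.insert a).subset hB.subset)
      have haB' : a ∈ B := haB rfl
      have hBa : B \ {a} ⊆ I := by
        rintro x ⟨hx, hxa⟩
        rcases hB.subset hx with h | h
        · exact absurd h hxa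
        · exact h
      have hMind : M.Indep (B \ {a}) := by
        refine (eleSplit_indep_insert_iff M N φ hM T a hNfull (hBa.trans hIE)).mp ?_
        rw [insert_diff_singleton, insert_eq_self.mpr haB']
        exact hB.indep
      have hle : (B \ {a}).ncard ≤ m := by
        refine le_csSup hSMbdd ⟨B \ {a}, hMind, ?_, rfl⟩
        rintro x ⟨hx, hxa⟩
        exact ⟨hIA (hBa ⟨hx, hxa⟩), hxa⟩
      have hcard : I.encard ≤ B.encard := by
        calc I.encard ≤ B'.encard := Set.encard_mono hIB'
        _ = B.encard := hB'.encard_eq_encard hB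
      have hcard' : I.ncard ≤ B.ncard := by
        have := ENat.toNat_le_toNat hcard hBfin.encard_lt_top.ne
        simpa [Set.ncard_def] using this
      have := Set.ncard_diff_singleton_add_one haB' hBfin
      omega
  have hSNne : SN.Nonempty := ⟨0, ∅, N.empty_indep, empty_subset _, by simp⟩
  refine le_antisymm (csSup_le hSNne hub) ?_
  -- lower bound: insert a I₀ is independent in N
  have hI₀E : I₀ ⊆ M.E := hI₀A.trans hAE
  have haI₀ : a ∉ I₀ := fun h => (hI₀A h).2 rfl
  have hNind : N.Indep (insert a I₀) :=
    (eleSplit_indep_insert_iff M N φ hM T a hNfull hI₀E).mpr hI₀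
  have hmem : m + 1 ∈ SN := by
    refine ⟨insert a I₀, hNind, insert_subset haA (hI₀A.trans diff_subset), ?_⟩
    rw [Set.ncard_insert_of_notMem haI₀ (hAfin.subset (hI₀A.trans diff_subset)), hI₀c]
  exact le_csSup ⟨m + 1, hub⟩ hmem
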